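/- Let X = {X(t) : t ∈ [0,1]} be a centered Gaussian process with a.s. bounded Φ-variation, where Φ : ℝ₊ → ℝ₊ is convex, strictly increasing, Φ(0)=0, and satisfies the Δ₂-condition. Set d(s,t) = ‖X(s)−X(t)‖_{L²}. Then 𝒱(Φ, c·d) < ∞ for c = √(2/π), i.e., sup over partitions of Σᵢ Φ(c·d(tᵢ,t_{i−1})) is finite. -/

import Mathlib

open MeasureTheory ProbabilityTheory Real

private lemma aux_y_exp (y : ℝ) (hy : 0 ≤ y) : y * Real.exp (-y) ≤ Real.exp (-y/2) := by
  have h1 : 1 + y/4 ≤ Real.exp (y/4) := by nlinarith [Real.add_one_le_exp (y/4)]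
  have h2 : Real.exp (y/2) = Real.exp (y/4) * Real.exp (y/4) := by
    rw [← Real.exp_add]; ring_nf
  have h3 : y ≤ Real.exp (y/2) := by nlinarith [sq_nonneg (1 - y/4), Real.exp_pos (y/4)]
  have h4 : Real.exp (-y) * Real.exp (y/2) = Real.exp (-y/2) := by
    rw [← Real.exp_add]; ring_nf
  calc y * Real.exp (-y) ≤ Real.exp (y/2) * Real.exp (-y) := by
        exact mul_le_mul_of_nonneg_right h3 (Real.exp_pos _).le
    _ = Real.exp (-y/2) := by rw [mul_comm]; exact h4

lemma gauss_sq_moment (v : NNReal) :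
    ∫⁻ x, ENNReal.ofReal (x^2) ∂(gaussianReal 0 v) ≤ ENNReal.ofReal (4*v) := by
  by_cases hv : v = 0
  · subst hv
    rw [gaussianReal_zero_var, lintegral_dirac]
    simp
  · have hvpos : (0:ℝ) < v := lt_of_le_of_ne (v.coe_nonneg) (by exact_mod_cast (Ne.symm hv))
    rw [gaussianReal_of_var_ne_zero _ hv,
      lintegral_withDensity_eq_lintegral_mul _ (measurable_gaussianPDF 0 v)
        (by fun_prop : Measurable fun x : ℝ => ENNReal.ofReal (x^2))]
    have hptwise : ∀ x : ℝ, gaussianPDF 0 v x * ENNReal.ofReal (x^2)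
        ≤ ENNReal.ofReal ((√(2 * π * v))⁻¹ * (2 * v * Real.exp (-(4*(v:ℝ))⁻¹ * x^2))) := by
      intro x
      rw [gaussianPDF, ← ENNReal.ofReal_mul (gaussianPDFReal_nonneg 0 v x)]
      apply ENNReal.ofReal_le_ofReal
      rw [gaussianPDFReal]
      have key : Real.exp (- (x - 0)^2 / (2 * v)) * x^2 ≤ 2 * v * Real.exp (-(4*(v:ℝ))⁻¹ * x^2) := by
        set y : ℝ := x^2 / (2*v) with hy
        have hy0 : 0 ≤ y := by positivity
        have hx2 : x^2 = 2*v*y := by rw [hy]; field_simp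
        have e1 : Real.exp (- (x - 0)^2 / (2 * v)) = Real.exp (-y) := by
          rw [sub_zero]; congr 1; field_simp [hy]; linarith
        have e2 : Real.exp (-(4*(v:ℝ))⁻¹ * x^2) = Real.exp (-y/2) := by
          congr 1; rw [hx2]; field_simp; ring
        rw [e1, e2, hx2]
        have := aux_y_exp y hy0
        nlinarith [Real.exp_pos (-y), Real.exp_pos (-y/2)]
      calc (√(2 * π * v))⁻¹ * Real.exp (- (x - 0)^2 / (2 * v)) * x^2
          = (√(2 * π * v))⁻¹ * (Real.exp (- (x - 0)^2 / (2 * v)) * x^2) := by ring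
        _ ≤ (√(2 * π * v))⁻¹ * (2 * v * Real.exp (-(4*(v:ℝ))⁻¹ * x^2)) := by
            apply mul_le_mul_of_nonneg_left key (by positivity)
    calc ∫⁻ x, gaussianPDF 0 v x * ENNReal.ofReal (x^2)
        ≤ ∫⁻ x, ENNReal.ofReal ((√(2 * π * v))⁻¹ * (2 * v * Real.exp (-(4*(v:ℝ))⁻¹ * x^2))) :=
          lintegral_mono hptwise
      _ = ENNReal.ofReal (∫ x, (√(2 * π * v))⁻¹ * (2 * v * Real.exp (-(4*(v:ℝ))⁻¹ * x^2))) := by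
          rw [← ofReal_integral_eq_lintegral_ofReal]
          · exact (((integrable_exp_neg_mul_sq (by positivity : (0:ℝ) < (4*(v:ℝ))⁻¹)).const_mul
              (2*v)).const_mul _)
          · exact ae_of_all _ fun x => by positivity
      _ ≤ ENNReal.ofReal (4*v) := by
          apply ENNReal.ofReal_le_ofReal
          rw [integral_const_mul, integral_const_mul, integral_gaussian]
          have h4v : √(π / (4*(v:ℝ))⁻¹) = √(4 * π * v) := by
            congr 1; field_simp
          rw [h4v]
          have hs1 : √(4 * π * v) ≤ 2 * √(2 * π * v) := by
            rw [show (2:ℝ) * √(2*π*v) = √4 * √(2*π*v) by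
              rw [show (4:ℝ) = 2^2 by norm_num, Real.sqrt_sq (by norm_num)],
              ← Real.sqrt_mul (by norm_num)]
            apply Real.sqrt_le_sqrt; nlinarith [Real.pi_pos]
          have hspos : (0:ℝ) < √(2 * π * v) := by
            apply Real.sqrt_pos.2; positivity
          calc (√(2*π*v))⁻¹ * (2*v * √(4*π*v)) ≤ (√(2*π*v))⁻¹ * (2*v * (2*√(2*π*v))) := by
                apply mul_le_mul_of_nonneg_left _ (by positivity)
                apply mul_le_mul_of_nonneg_left hs1 (by positivity)
            _ = 4*v := by field_simp; ring

private lemma gauss_small_ball {v : NNReal} (hv : v ≠ 0) :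
    (gaussianReal 0 v) {x : ℝ | |x| < Real.sqrt v / 2} ≤ ENNReal.ofReal (2/5) := by
  have hvpos : (0:ℝ) < v := lt_of_le_of_ne (v.coe_nonneg) (by exact_mod_cast (Ne.symm hv))
  have hset : {x : ℝ | |x| < Real.sqrt v / 2} = Set.Ioo (-(Real.sqrt v / 2)) (Real.sqrt v / 2) := by
    ext x; simp [abs_lt, Set.mem_Ioo, and_comm]
  rw [gaussianReal_apply _ hv, hset]
  have hpdf : ∀ x : ℝ, gaussianPDF 0 v x ≤ ENNReal.ofReal ((√(2 * π * v))⁻¹) := by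
    intro x
    rw [gaussianPDF]
    apply ENNReal.ofReal_le_ofReal
    rw [gaussianPDFReal]
    have : Real.exp (- (x - 0)^2 / (2 * v)) ≤ 1 := by
      apply Real.exp_le_one_iff.2
      apply div_nonpos_of_nonpos_of_nonneg _ (by positivity)
      simp [sq_nonneg]
    calc (√(2 * π * v))⁻¹ * Real.exp (- (x - 0)^2 / (2 * v)) ≤ (√(2 * π * v))⁻¹ * 1 :=
          mul_le_mul_of_nonneg_left this (by positivity)
      _ = (√(2 * π * v))⁻¹ := mul_one _
  calc ∫⁻ x in Set.Ioo (-(Real.sqrt v / 2)) (Real.sqrt v / 2), gaussianPDF 0 v x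
      ≤ ∫⁻ _ in Set.Ioo (-(Real.sqrt v / 2)) (Real.sqrt v / 2),
          ENNReal.ofReal ((√(2 * π * v))⁻¹) := lintegral_mono fun x => hpdf x
    _ = ENNReal.ofReal ((√(2 * π * v))⁻¹) *
          volume (Set.Ioo (-(Real.sqrt v / 2)) (Real.sqrt v / 2)) := by
        rw [setLIntegral_const]
    _ ≤ ENNReal.ofReal (2/5) := by
        rw [Real.volume_Ioo, ← ENNReal.ofReal_mul (by positivity)]
        apply ENNReal.ofReal_le_ofReal
        have h1 : (√(v:ℝ) / 2 - -(√(v:ℝ) / 2)) = √(v:ℝ) := by ring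
        rw [h1]
        rw [show (2:ℝ) * π * v = (2*π) * v by ring, Real.sqrt_mul (by positivity)]
        have hsv : (0:ℝ) < √(v:ℝ) := Real.sqrt_pos.2 hvpos
        have h2 : (5:ℝ)/2 ≤ √(2*π) := by
          have : ((5:ℝ)/2)^2 ≤ 2*π := by nlinarith [Real.pi_gt_d2]
          nlinarith [Real.sq_sqrt (by positivity : (0:ℝ) ≤ 2*π),
            Real.sqrt_nonneg (2*π)]
        have he : (√(2*π) * √(v:ℝ))⁻¹ * √(v:ℝ) = (√(2*π))⁻¹ := by
          field_simp
        rw [he, inv_le_comm₀ (by positivity) (by norm_num)]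
        linarith

private lemma increment_bound {Ω : Type*} [MeasurableSpace Ω] (μ : Measure Ω) [IsProbabilityMeasure μ]
    (Φ : ℝ → ℝ) (hmono : StrictMonoOn Φ (Set.Ici 0)) (hΦ0 : Φ 0 = 0)
    (C : ℝ) (hC : 0 < C) (hΔ2 : ∀ x ≥ (0:ℝ), Φ (2 * x) ≤ C * Φ x)
    (Z : Ω → ℝ) (hZ : Measurable Z) (v : NNReal)
    (hmap : Measure.map Z μ = gaussianReal 0 v)
    (dst : ℝ) (hdst : dst = Real.sqrt (∫ ω, (Z ω)^2 ∂μ))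
    (A : Set Ω) (hA : MeasurableSet A) (hAc : μ Aᶜ ≤ ENNReal.ofReal (1/8))
    (k : ℝ) (hk : 0 ≤ k) (hbound : ∀ ω ∈ A, Φ |Z ω| ≤ k) :
    Φ (Real.sqrt (2/Real.pi) * dst) ≤ 4 * C^2 * ∫ ω, A.indicator (fun ω' => Φ |Z ω'|) ω ∂μ := by
  have hmonoOn : MonotoneOn Φ (Set.Ici 0) := hmono.monotoneOn
  have hΦnn : ∀ y : ℝ, 0 ≤ y → 0 ≤ Φ y := fun y hy => by
    have := hmonoOn (Set.mem_Ici.2 le_rfl) (Set.mem_Ici.2 hy) hy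
    rwa [hΦ0] at this
  -- measurability of ω ↦ Φ |Z ω|
  have hψmono : Monotone (fun x : ℝ => Φ (max x 0)) := fun a b hab =>
    hmonoOn (Set.mem_Ici.2 (le_max_right a 0)) (Set.mem_Ici.2 (le_max_right b 0))
      (max_le_max hab le_rfl)
  have hΦabs : ∀ z : ℝ, Φ |z| = (fun x : ℝ => Φ (max x 0)) |z| := fun z => by
    simp [max_eq_left (abs_nonneg z)]
  have htermMeas : Measurable (fun ω => Φ |Z ω|) := by
    have : (fun ω => Φ |Z ω|) = (fun x : ℝ => Φ (max x 0)) ∘ (fun ω => |Z ω|) :=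
      funext fun ω => hΦabs (Z ω)
    rw [this]
    exact hψmono.measurable.comp hZ.abs
  set f : Ω → ℝ := A.indicator (fun ω' => Φ |Z ω'|) with hf
  have hfnn : ∀ ω, 0 ≤ f ω := fun ω =>
    Set.indicator_nonneg (fun ω' _ => hΦnn _ (abs_nonneg _)) ω
  have hfint : Integrable f μ := by
    refine Integrable.mono' (integrable_const k) ((htermMeas.indicator hA).aestronglyMeasurable)
      (ae_of_all _ fun ω => ?_)
    rw [Real.norm_eq_abs, abs_of_nonneg (hfnn ω)]
    by_cases hω : ω ∈ A
    · rw [hf, Set.indicator_of_mem hω]; exact hbound ω hω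
    · rw [hf, Set.indicator_of_notMem hω]; exact hk
  have hRHSnn : 0 ≤ ∫ ω, f ω ∂μ := integral_nonneg hfnn
  -- second moment bound: dst ≤ 2 √v
  have hZ2 : ∫ ω, (Z ω)^2 ∂μ ≤ 4 * v := by
    rw [integral_eq_lintegral_of_nonneg_ae (ae_of_all _ fun ω => sq_nonneg (Z ω))
      ((hZ.pow_const 2).aestronglyMeasurable)]
    have hl : ∫⁻ ω, ENNReal.ofReal ((Z ω)^2) ∂μ ≤ ENNReal.ofReal (4*v) := by
      have := lintegral_map (μ := μ) (f := fun x : ℝ => ENNReal.ofReal (x^2))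
        (by fun_prop) hZ
      rw [hmap] at this
      rw [← this]
      exact gauss_sq_moment v
    exact ENNReal.toReal_le_of_le_ofReal (by positivity) hl
  have hdstnn : 0 ≤ dst := hdst ▸ Real.sqrt_nonneg _
  have hdstle : dst ≤ 2 * Real.sqrt v := by
    rw [hdst]
    calc Real.sqrt (∫ ω, (Z ω)^2 ∂μ) ≤ Real.sqrt (4*v) := Real.sqrt_le_sqrt hZ2
      _ = 2 * Real.sqrt v := by
          rw [show (4:ℝ)*(v:ℝ) = 2^2*(v:ℝ) by norm_num, Real.sqrt_mul (by positivity),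
            Real.sqrt_sq (by norm_num)]
  have hc1 : Real.sqrt (2/Real.pi) ≤ 1 := by
    rw [show (1:ℝ) = Real.sqrt 1 by simp]
    exact Real.sqrt_le_sqrt (by rw [div_le_one Real.pi_pos]; exact Real.two_le_pi)
  have hcd : Real.sqrt (2/Real.pi) * dst ≤ 2 * Real.sqrt v := by
    calc Real.sqrt (2/Real.pi) * dst ≤ 1 * dst :=
          mul_le_mul_of_nonneg_right hc1 hdstnn
      _ = dst := one_mul _
      _ ≤ 2 * Real.sqrt v := hdstle
  by_cases hv : v = 0
  · have h0 : Real.sqrt (2/Real.pi) * dst = 0 := by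
      have : dst = 0 := le_antisymm (by simpa [hv] using hdstle) hdstnn
      rw [this, mul_zero]
    rw [h0, hΦ0]
    positivity
  -- main case
  set B : Set Ω := {ω | Real.sqrt v / 2 ≤ |Z ω|} with hBdef
  have hBmeas : MeasurableSet B := measurableSet_le measurable_const hZ.abs
  have hBc : μ Bᶜ ≤ ENNReal.ofReal (2/5) := by
    have hsetm : MeasurableSet {x : ℝ | |x| < Real.sqrt v / 2} := by
      have : {x : ℝ | |x| < Real.sqrt v / 2}
          = Set.Ioo (-(Real.sqrt v / 2)) (Real.sqrt v / 2) := by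
        ext x; simp [abs_lt, Set.mem_Ioo, and_comm]
      rw [this]; exact measurableSet_Ioo
    have : Bᶜ = Z ⁻¹' {x : ℝ | |x| < Real.sqrt v / 2} := by
      ext ω; simp [hBdef, not_le]
    rw [this, ← Measure.map_apply hZ hsetm, hmap]
    exact gauss_small_ball hv
  have hABmeas : MeasurableSet (A ∩ B) := hA.inter hBmeas
  have hAB : ENNReal.ofReal (1/4) ≤ μ (A ∩ B) := by
    have hcompl : μ (A ∩ B)ᶜ ≤ ENNReal.ofReal (21/40) := by
      rw [Set.compl_inter]
      calc μ (Aᶜ ∪ Bᶜ) ≤ μ Aᶜ + μ Bᶜ := measure_union_le _ _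
        _ ≤ ENNReal.ofReal (1/8) + ENNReal.ofReal (2/5) := add_le_add hAc hBc
        _ = ENNReal.ofReal (21/40) := by
            rw [← ENNReal.ofReal_add (by norm_num) (by norm_num)]; norm_num
    have hsum : μ (A ∩ B) + μ (A ∩ B)ᶜ = 1 := by
      rw [measure_add_measure_compl hABmeas, measure_univ]
    have h1 : (1:ENNReal) ≤ μ (A ∩ B) + ENNReal.ofReal (21/40) := by
      rw [← hsum]; exact add_le_add le_rfl hcompl
    have h2 : (1:ENNReal) - ENNReal.ofReal (21/40) ≤ μ (A ∩ B) := tsub_le_iff_right.mpr h1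
    calc ENNReal.ofReal (1/4) ≤ (1:ENNReal) - ENNReal.ofReal (21/40) := by
          rw [← ENNReal.ofReal_one, ← ENNReal.ofReal_sub _ (by norm_num)]
          exact ENNReal.ofReal_le_ofReal (by norm_num)
      _ ≤ μ (A ∩ B) := h2
  have htoReal : (1:ℝ)/4 ≤ (μ (A ∩ B)).toReal := by
    have := ENNReal.toReal_mono (measure_ne_top μ _) hAB
    rwa [ENNReal.toReal_ofReal (by norm_num)] at this
  have hΦsv : 0 ≤ Φ (Real.sqrt v / 2) := hΦnn _ (by positivity)
  set g : Ω → ℝ := (A ∩ B).indicator (fun _ => Φ (Real.sqrt v / 2)) with hg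
  have hgint : Integrable g μ := (integrable_const _).indicator hABmeas
  have hglef : ∀ ω, g ω ≤ f ω := by
    intro ω
    by_cases hω : ω ∈ A ∩ B
    · rw [hg, Set.indicator_of_mem hω, hf, Set.indicator_of_mem hω.1]
      exact hmonoOn (Set.mem_Ici.2 (by positivity)) (Set.mem_Ici.2 (abs_nonneg _)) hω.2
    · rw [hg, Set.indicator_of_notMem hω]; exact hfnn ω
  have hintg : ∫ ω, g ω ∂μ = (μ (A ∩ B)).toReal * Φ (Real.sqrt v / 2) := by
    rw [hg, integral_indicator_const _ hABmeas]; simp [smul_eq_mul, measureReal_def]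
  have hkey : Φ (Real.sqrt v / 2) ≤ 4 * ∫ ω, f ω ∂μ := by
    have h6 : ∫ ω, g ω ∂μ ≤ ∫ ω, f ω ∂μ := integral_mono hgint hfint hglef
    rw [hintg] at h6
    nlinarith [mul_le_mul_of_nonneg_left htoReal hΦsv]
  -- chain
  have e1 : Φ (Real.sqrt (2/Real.pi) * dst) ≤ Φ (2*(2*(Real.sqrt v / 2))) := by
    apply hmonoOn (Set.mem_Ici.2 (by positivity)) (Set.mem_Ici.2 (by positivity))
    calc Real.sqrt (2/Real.pi) * dst ≤ 2 * Real.sqrt v := hcd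
      _ = 2*(2*(Real.sqrt v / 2)) := by ring
  have e2 : Φ (2*(2*(Real.sqrt v / 2))) ≤ C * Φ (2*(Real.sqrt v / 2)) := hΔ2 _ (by positivity)
  have e3 : Φ (2*(Real.sqrt v / 2)) ≤ C * Φ (Real.sqrt v / 2) := hΔ2 _ (by positivity)
  calc Φ (Real.sqrt (2/Real.pi) * dst) ≤ C * Φ (2*(Real.sqrt v / 2)) := e1.trans e2
    _ ≤ C * (C * Φ (Real.sqrt v / 2)) := mul_le_mul_of_nonneg_left e3 hC.le
    _ ≤ C * (C * (4 * ∫ ω, f ω ∂μ)) := by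
        apply mul_le_mul_of_nonneg_left _ hC.le
        exact mul_le_mul_of_nonneg_left hkey hC.le
    _ = 4 * C^2 * ∫ ω, f ω ∂μ := by ring

/-- The set of all sums `∑ g(tᵢ, tᵢ₊₁)` over partitions `a = t₀ < t₁ < ⋯ < tₙ = b`. -/
def partitionSums (g : ℝ → ℝ → ℝ) (a b : ℝ) : Set ℝ :=
  {S | ∃ (n : ℕ) (t : ℕ → ℝ), 0 < n ∧ t 0 = a ∧ t n = b ∧
    (∀ i < n, t i < t (i + 1)) ∧ S = ∑ i ∈ Finset.range n, g (t i) (t (i + 1))}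

theorem gaussian_variation_necessary {Ω : Type*} [MeasurableSpace Ω] (μ : Measure Ω)
    [IsProbabilityMeasure μ] (X : ℝ → Ω → ℝ) (hmeas : ∀ t, Measurable (X t))
    (hGauss : ∀ (s : Finset ℝ) (a : ℝ → ℝ), ∃ v : NNReal,
      Measure.map (fun ω => ∑ t ∈ s, a t * X t ω) μ = gaussianReal 0 v)
    (Φ : ℝ → ℝ) (hconv : ConvexOn ℝ (Set.Ici 0) Φ)
    (hmono : StrictMonoOn Φ (Set.Ici 0)) (hΦ0 : Φ 0 = 0)
    (C : ℝ) (hΔ2 : ∀ x ≥ (0 : ℝ), Φ (2 * x) ≤ C * Φ x)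
    (d : ℝ → ℝ → ℝ) (hd : ∀ s t, d s t = Real.sqrt (∫ ω, (X s ω - X t ω) ^ 2 ∂μ))
    (hVar : ∀ᵐ ω ∂μ, BddAbove (partitionSums (fun s t => Φ |X t ω - X s ω|) 0 1)) :
    BddAbove (partitionSums (fun s t => Φ (Real.sqrt (2 / Real.pi) * d s t)) 0 1) := by
  have hmonoOn : MonotoneOn Φ (Set.Ici 0) := hmono.monotoneOn
  have hΦnn : ∀ y : ℝ, 0 ≤ y → 0 ≤ Φ y := fun y hy => by
    have := hmonoOn (Set.mem_Ici.2 le_rfl) (Set.mem_Ici.2 hy) hy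
    rwa [hΦ0] at this
  by_contra hbdd
  rw [not_bddAbove_iff] at hbdd
  have hex : ∀ n : ℕ, ∃ (mm : ℕ) (t : ℕ → ℝ), 0 < mm ∧ t 0 = 0 ∧ t mm = 1 ∧
      (∀ i < mm, t i < t (i+1)) ∧
      (n:ℝ) < ∑ i ∈ Finset.range mm, Φ (Real.sqrt (2/Real.pi) * d (t i) (t (i+1))) := by
    intro n
    obtain ⟨y, ⟨mm, t, h1, h2, h3, h4, h5⟩, hlt⟩ := hbdd (n:ℝ)
    exact ⟨mm, t, h1, h2, h3, h4, h5 ▸ hlt⟩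
  choose m τ hm hτ0 hτ1 hτlt hsum using hex
  -- measurability of terms
  have hψmono : Monotone (fun x : ℝ => Φ (max x 0)) := fun a b hab =>
    hmonoOn (Set.mem_Ici.2 (le_max_right a 0)) (Set.mem_Ici.2 (le_max_right b 0))
      (max_le_max hab le_rfl)
  have htermMeas : ∀ s t : ℝ, Measurable (fun ω => Φ |X t ω - X s ω|) := by
    intro s t
    have : (fun ω => Φ |X t ω - X s ω|) =
        (fun x : ℝ => Φ (max x 0)) ∘ (fun ω => |X t ω - X s ω|) :=
      funext fun ω => by simp [max_eq_left (abs_nonneg (X t ω - X s ω))]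
    rw [this]
    exact hψmono.measurable.comp ((hmeas t).sub (hmeas s)).abs
  set S : ℕ → Ω → ℝ := fun n ω =>
    ∑ i ∈ Finset.range (m n), Φ |X (τ n (i+1)) ω - X (τ n i) ω| with hSdef
  have hSmeas : ∀ n, Measurable (S n) := fun n =>
    Finset.measurable_sum _ fun i _ => htermMeas _ _
  set A : ℕ → Set Ω := fun k => {ω | ∀ n, S n ω ≤ (k:ℝ)} with hAdef
  have hAmeas : ∀ k, MeasurableSet (A k) := by
    intro k
    have : A k = ⋂ n, (S n) ⁻¹' (Set.Iic (k:ℝ)) := by ext ω; simp [hAdef]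
    rw [this]
    exact MeasurableSet.iInter fun n => (hSmeas n) measurableSet_Iic
  have hmonoA : Monotone A := fun k l hkl ω hω n =>
    (hω n).trans (by exact_mod_cast hkl)
  have hunion : μ (⋃ k, A k) = 1 := by
    rw [← prob_compl_eq_zero_iff (MeasurableSet.iUnion hAmeas)]
    have hae : ∀ᵐ ω ∂μ, ω ∈ ⋃ k, A k := by
      filter_upwards [hVar] with ω hω
      obtain ⟨b, hb⟩ := hω
      refine Set.mem_iUnion.2 ⟨⌈b⌉₊, fun n => ?_⟩
      have hmem : S n ω ∈ partitionSums (fun s t => Φ |X t ω - X s ω|) 0 1 :=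
        ⟨m n, τ n, hm n, hτ0 n, hτ1 n, hτlt n, rfl⟩
      exact (hb hmem).trans (Nat.le_ceil b)
    rw [ae_iff] at hae
    convert hae using 2 <;> rfl
  obtain ⟨k, hk⟩ : ∃ k, ENNReal.ofReal (7/8) < μ (A k) := by
    have htend : Filter.Tendsto (fun k => μ (A k)) Filter.atTop (nhds (μ (⋃ k, A k))) :=
      tendsto_measure_iUnion_atTop hmonoA
    rw [hunion] at htend
    have : ∀ᶠ k in Filter.atTop, ENNReal.ofReal (7/8) < μ (A k) :=
      (tendsto_order.1 htend).1 _ (by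
        rw [← ENNReal.ofReal_one]
        exact ENNReal.ofReal_lt_ofReal_iff_of_nonneg (by norm_num) |>.2 (by norm_num))
    exact this.exists
  have hAc : μ (A k)ᶜ ≤ ENNReal.ofReal (1/8) := by
    rw [prob_compl_eq_one_sub (hAmeas k)]
    calc 1 - μ (A k) ≤ 1 - ENNReal.ofReal (7/8) := tsub_le_tsub_left hk.le 1
      _ = ENNReal.ofReal (1/8) := by
          rw [← ENNReal.ofReal_one, ← ENNReal.ofReal_sub _ (by norm_num)]; norm_num
  -- C > 0
  have hC : 0 < C := by
    have h0 : (0:ℝ) < ∑ i ∈ Finset.range (m 0),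
        Φ (Real.sqrt (2/Real.pi) * d (τ 0 i) (τ 0 (i+1))) := by
      have := hsum 0; simpa using this
    obtain ⟨i, _, hi⟩ : ∃ i ∈ Finset.range (m 0),
        0 < Φ (Real.sqrt (2/Real.pi) * d (τ 0 i) (τ 0 (i+1))) := by
      by_contra hcon
      push_neg at hcon
      exact absurd (Finset.sum_nonpos hcon) (not_le.2 h0)
    set r : ℝ := d (τ 0 i) (τ 0 (i+1)) with hr
    have hr0 : 0 ≤ r := by rw [hr, hd]; exact Real.sqrt_nonneg _
    have hcnn : (0:ℝ) ≤ Real.sqrt (2/Real.pi) := Real.sqrt_nonneg _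
    have hrpos : 0 < r := by
      rcases lt_or_eq_of_le (mul_nonneg hcnn hr0) with h | h
      · rcases lt_or_eq_of_le hr0 with h' | h'
        · exact h'
        · exfalso; rw [← h', mul_zero] at h; exact lt_irrefl _ h
      · exfalso; rw [← h, hΦ0] at hi; exact lt_irrefl _ hi
    have hΦr : 0 < Φ r := by
      have := hmono (Set.mem_Ici.2 le_rfl) (Set.mem_Ici.2 hr0) hrpos
      rwa [hΦ0] at this
    have hΦhalf : 0 < Φ (r/2) := by
      have := hmono (Set.mem_Ici.2 le_rfl) (Set.mem_Ici.2 (half_pos hrpos).le) (half_pos hrpos)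
      rwa [hΦ0] at this
    have := hΔ2 (r/2) (half_pos hrpos).le
    rw [show 2*(r/2) = r by ring] at this
    nlinarith
  -- final contradiction
  set n₀ : ℕ := ⌈4*C^2*(k:ℝ)⌉₊ with hn₀
  have hknn : (0:ℝ) ≤ (k:ℝ) := Nat.cast_nonneg k
  -- per-increment bound
  have hinc : ∀ i ∈ Finset.range (m n₀),
      Φ (Real.sqrt (2/Real.pi) * d (τ n₀ i) (τ n₀ (i+1))) ≤ 4 * C^2 *
        ∫ ω, (A k).indicator (fun ω' => Φ |X (τ n₀ (i+1)) ω' - X (τ n₀ i) ω'|) ω ∂μ := by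
    intro i hi
    rw [Finset.mem_range] at hi
    set s : ℝ := τ n₀ i
    set t : ℝ := τ n₀ (i+1)
    have hst : s < t := hτlt n₀ i hi
    obtain ⟨v, hv⟩ := hGauss {s, t} (fun u => if u = t then 1 else -1)
    have hZfun : (fun ω => ∑ u ∈ ({s, t} : Finset ℝ), (if u = t then 1 else -1) * X u ω)
        = fun ω => X t ω - X s ω := by
      funext ω
      rw [Finset.sum_pair hst.ne]
      rw [if_neg hst.ne, if_pos rfl]
      ring
    rw [hZfun] at hv
    have hdst : d s t = Real.sqrt (∫ ω, (X t ω - X s ω)^2 ∂μ) := by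
      rw [hd]
      congr 1
      apply integral_congr_ae
      exact ae_of_all _ fun ω => by ring
    have hbound : ∀ ω ∈ A k, Φ |X t ω - X s ω| ≤ (k:ℝ) := by
      intro ω hω
      have hsingle : Φ |X t ω - X s ω| ≤ S n₀ ω := by
        refine Finset.single_le_sum (f := fun j => Φ |X (τ n₀ (j+1)) ω - X (τ n₀ j) ω|)
          (fun j _ => hΦnn _ (abs_nonneg _)) (Finset.mem_range.2 hi)
      exact hsingle.trans (hω n₀)
    exact increment_bound μ Φ hmono hΦ0 C hC hΔ2 _ ((hmeas t).sub (hmeas s)) v hv _ hdst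
      (A k) (hAmeas k) hAc (k:ℝ) hknn hbound
  -- integrability of each indicator
  have hfint : ∀ i ∈ Finset.range (m n₀),
      Integrable ((A k).indicator
        (fun ω' => Φ |X (τ n₀ (i+1)) ω' - X (τ n₀ i) ω'|)) μ := by
    intro i hi
    rw [Finset.mem_range] at hi
    refine Integrable.mono' (integrable_const (k:ℝ))
      (((htermMeas _ _).indicator (hAmeas k)).aestronglyMeasurable)
      (ae_of_all _ fun ω => ?_)
    have hnn : 0 ≤ (A k).indicator
        (fun ω' => Φ |X (τ n₀ (i+1)) ω' - X (τ n₀ i) ω'|) ω :=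
      Set.indicator_nonneg (fun ω' _ => hΦnn _ (abs_nonneg _)) ω
    rw [Real.norm_eq_abs, abs_of_nonneg hnn]
    by_cases hω : ω ∈ A k
    · rw [Set.indicator_of_mem hω]
      have hsingle : Φ |X (τ n₀ (i+1)) ω - X (τ n₀ i) ω| ≤ S n₀ ω :=
        Finset.single_le_sum (f := fun j => Φ |X (τ n₀ (j+1)) ω - X (τ n₀ j) ω|)
          (fun j _ => hΦnn _ (abs_nonneg _)) (Finset.mem_range.2 hi)
      exact hsingle.trans (hω n₀)
    · rw [Set.indicator_of_notMem hω]; exact hknn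
  have hsum_le : ∑ i ∈ Finset.range (m n₀),
      (∫ ω, (A k).indicator (fun ω' => Φ |X (τ n₀ (i+1)) ω' - X (τ n₀ i) ω'|) ω ∂μ)
      ≤ (k:ℝ) := by
    rw [← integral_finset_sum _ hfint]
    have hle : ∀ ω, (∑ i ∈ Finset.range (m n₀),
        (A k).indicator (fun ω' => Φ |X (τ n₀ (i+1)) ω' - X (τ n₀ i) ω'|) ω) ≤ (k:ℝ) := by
      intro ω
      by_cases hω : ω ∈ A k
      · have : (∑ i ∈ Finset.range (m n₀),
            (A k).indicator (fun ω' => Φ |X (τ n₀ (i+1)) ω' - X (τ n₀ i) ω'|) ω) = S n₀ ω := by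
          rw [hSdef]
          exact Finset.sum_congr rfl fun i _ => Set.indicator_of_mem hω _
        rw [this]; exact hω n₀
      · have : (∑ i ∈ Finset.range (m n₀),
            (A k).indicator (fun ω' => Φ |X (τ n₀ (i+1)) ω' - X (τ n₀ i) ω'|) ω) = 0 :=
          Finset.sum_eq_zero fun i _ => Set.indicator_of_notMem hω _
        rw [this]; exact hknn
    calc ∫ ω, (∑ i ∈ Finset.range (m n₀),
          (A k).indicator (fun ω' => Φ |X (τ n₀ (i+1)) ω' - X (τ n₀ i) ω'|) ω) ∂μ
        ≤ ∫ _, (k:ℝ) ∂μ :=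
          integral_mono (integrable_finset_sum _ hfint) (integrable_const _) hle
      _ = (k:ℝ) := by simp
  have hfinal : ((n₀:ℕ):ℝ) < 4*C^2*(k:ℝ) := by
    calc (n₀:ℝ) < ∑ i ∈ Finset.range (m n₀),
          Φ (Real.sqrt (2/Real.pi) * d (τ n₀ i) (τ n₀ (i+1))) := hsum n₀
      _ ≤ ∑ i ∈ Finset.range (m n₀), 4 * C^2 *
          (∫ ω, (A k).indicator (fun ω' => Φ |X (τ n₀ (i+1)) ω' - X (τ n₀ i) ω'|) ω ∂μ) :=
          Finset.sum_le_sum hinc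
      _ = 4*C^2 * ∑ i ∈ Finset.range (m n₀),
          (∫ ω, (A k).indicator (fun ω' => Φ |X (τ n₀ (i+1)) ω' - X (τ n₀ i) ω'|) ω ∂μ) := by
          rw [Finset.mul_sum]
      _ ≤ 4*C^2*(k:ℝ) := mul_le_mul_of_nonneg_left hsum_le (by positivity)
  have := Nat.le_ceil (4*C^2*(k:ℝ))
  rw [← hn₀] at this
  linarith
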